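/- Let E ⊆ ℝ be a Cantor set and let M be the set of midpoints of the bounded connected components of ℝ \ E. Then M = {r ∈ ℝ : ∃ ε > 0, E ∩ [r−ε, r+ε] = {r−ε, r+ε}} and E equals the frontier Fr(M) = Cl(M) \ M of M. -/

import Mathlib

/-- A Cantor set: a nonempty compact subset of `ℝ` with empty interior and
no isolated points. -/
def IsCantorSet (K : Set ℝ) : Prop :=
  K.Nonempty ∧ IsCompact K ∧ interior K = ∅ ∧ ∀ x ∈ K, AccPt x (Filter.principal K)

/-- The set of midpoints of the bounded connected components of `ℝ \ E`:
a bounded component of the complement of the closed set `E` is an interval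
`(a,b)` with `a, b ∈ E` and `(a,b) ∩ E = ∅`. -/
def midSet (E : Set ℝ) : Set ℝ :=
  {m : ℝ | ∃ a b : ℝ, a < b ∧ a ∈ E ∧ b ∈ E ∧ Set.Ioo a b ⊆ Eᶜ ∧ m = (a + b) / 2}

lemma mid_unique (E : Set ℝ) {a b : ℝ} (hab : a < b) (ha : a ∈ E) (hb : b ∈ E)
    (hsub : Set.Ioo a b ⊆ Eᶜ) {m : ℝ} (hm : m ∈ midSet E) (hmem : m ∈ Set.Ioo a b) :
    m = (a + b) / 2 := by
  obtain ⟨a', b', hab', ha', hb', hsub', rfl⟩ := hm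
  have hm1 : a' < (a' + b') / 2 := by linarith
  have hm2 : (a' + b') / 2 < b' := by linarith
  have haa : a = a' := by
    rcases lt_trichotomy a a' with h | h | h
    · exact absurd ha' (hsub ⟨h, lt_trans hm1 hmem.2⟩)
    · exact h
    · exact absurd ha (hsub' ⟨h, lt_trans hmem.1 hm2⟩)
  have hbb : b = b' := by
    rcases lt_trichotomy b b' with h | h | h
    · exact absurd hb (hsub' ⟨lt_trans hm1 hmem.2, h⟩)
    · exact h
    · exact absurd hb' (hsub ⟨lt_trans hmem.1 hm2, h⟩)
  rw [haa, hbb]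

lemma mid_between (E : Set ℝ) {z : ℝ} (hcE : IsCompact E) (hz : z ∉ E)
    (hl : (E ∩ Set.Iic z).Nonempty) (hr : (E ∩ Set.Ici z).Nonempty) :
    ∃ a b : ℝ, a < z ∧ z < b ∧ a ∈ E ∧ b ∈ E ∧ Set.Ioo a b ⊆ Eᶜ ∧ (a+b)/2 ∈ midSet E := by
  have hA : IsCompact (E ∩ Set.Iic z) := hcE.inter_right isClosed_Iic
  have hB : IsCompact (E ∩ Set.Ici z) := hcE.inter_right isClosed_Ici
  set a := sSup (E ∩ Set.Iic z) with ha_def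
  set b := sInf (E ∩ Set.Ici z) with hb_def
  have haA : a ∈ E ∩ Set.Iic z := hA.sSup_mem hl
  have hbB : b ∈ E ∩ Set.Ici z := hB.sInf_mem hr
  have haz : a < z := lt_of_le_of_ne haA.2 (fun h => hz (h ▸ haA.1))
  have hzb : z < b := lt_of_le_of_ne (hbB.2) (fun h => hz (h ▸ hbB.1))
  have hsub : Set.Ioo a b ⊆ Eᶜ := by
    intro w hw hwE
    rcases le_or_gt w z with h | h
    · have : w ≤ a := le_csSup hA.bddAbove ⟨hwE, h⟩
      exact absurd hw.1 (not_lt.2 this)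
    · have : b ≤ w := csInf_le hB.bddBelow ⟨hwE, h.le⟩
      exact absurd hw.2 (not_lt.2 this)
  exact ⟨a, b, haz, hzb, haA.1, hbB.1, hsub,
    ⟨a, b, haz.trans hzb, haA.1, hbB.1, hsub, rfl⟩⟩

lemma exists_mid_in_Ioo (E : Set ℝ) (hcE : IsCompact E) (hint : interior E = ∅)
    {u v : ℝ} (hu : u ∈ E) (hv : v ∈ E) (huv : u < v) :
    ∃ m ∈ midSet E, m ∈ Set.Ioo u v := by
  obtain ⟨z, hzuv, hzE⟩ : ∃ z ∈ Set.Ioo u v, z ∉ E := by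
    by_contra h
    push_neg at h
    have : Set.Ioo u v ⊆ interior E := interior_maximal h isOpen_Ioo
    rw [hint, Set.subset_empty_iff, Set.Ioo_eq_empty_iff] at this
    exact this huv
  obtain ⟨a, b, haz, hzb, haE, hbE, hsub, hm⟩ :=
    mid_between E hcE hzE ⟨u, hu, hzuv.1.le⟩ ⟨v, hv, hzuv.2.le⟩
  have hua : u ≤ a := by
    by_contra h
    push_neg at h
    exact hsub ⟨h, hzuv.1.trans hzb⟩ hu
  have hbv : b ≤ v := by
    by_contra h
    push_neg at h
    exact hsub ⟨haz.trans hzuv.2, h⟩ hv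
  exact ⟨(a+b)/2, hm, ⟨by linarith, by linarith⟩⟩


/-- for a Cantor set `E`, the set `M` of midpoints of the bounded
complementary intervals satisfies
`M = {r | ∃ ε > 0, E ∩ [r−ε, r+ε] = {r−ε, r+ε}}` and `E = Cl(M) \ M`. -/
theorem stmt8 (E : Set ℝ) (hE : IsCantorSet E) :
    midSet E = {r : ℝ | ∃ ε > 0, E ∩ Set.Icc (r - ε) (r + ε) = {r - ε, r + ε}} ∧
    E = closure (midSet E) \ midSet E := by
  obtain ⟨hne, hcE, hint, hacc⟩ := hE
  constructor
  · ext r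
    constructor
    · rintro ⟨a, b, hab, ha, hb, hsub, rfl⟩
      refine ⟨(b - a) / 2, by linarith, ?_⟩
      have h1 : (a + b) / 2 - (b - a) / 2 = a := by ring
      have h2 : (a + b) / 2 + (b - a) / 2 = b := by ring
      rw [h1, h2]
      ext x
      simp only [Set.mem_inter_iff, Set.mem_Icc, Set.mem_insert_iff, Set.mem_singleton_iff]
      constructor
      · rintro ⟨hxE, hax, hxb⟩
        rcases eq_or_lt_of_le hax with h | h
        · exact Or.inl h.symm
        rcases eq_or_lt_of_le hxb with h' | h'
        · exact Or.inr h'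
        exact absurd hxE (hsub ⟨h, h'⟩)
      · rintro (rfl | rfl)
        · exact ⟨ha, le_refl _, hab.le⟩
        · exact ⟨hb, hab.le, le_refl _⟩
    · rintro ⟨ε, hε, heq⟩
      have ha : r - ε ∈ E ∩ Set.Icc (r - ε) (r + ε) := by
        rw [heq]; exact Set.mem_insert _ _
      have hb : r + ε ∈ E ∩ Set.Icc (r - ε) (r + ε) := by
        rw [heq]; exact Set.mem_insert_of_mem _ rfl
      refine ⟨r - ε, r + ε, by linarith, ha.1, hb.1, ?_, by ring⟩
      intro x hx hxE
      have : x ∈ E ∩ Set.Icc (r - ε) (r + ε) := ⟨hxE, hx.1.le, hx.2.le⟩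
      rw [heq] at this
      rcases this with h | h
      · exact absurd h (ne_of_gt hx.1)
      · exact absurd h (ne_of_lt hx.2)
  · ext x
    constructor
    · intro hx
      have hxM : x ∉ midSet E := by
        rintro ⟨a, b, hab, ha, hb, hsub, rfl⟩
        exact hsub ⟨by linarith, by linarith⟩ hx
      refine ⟨?_, hxM⟩
      rw [mem_closure_iff]
      intro o ho hxo
      obtain ⟨δ, hδ, hball⟩ := Metric.isOpen_iff.1 ho x hxo
      obtain ⟨y, ⟨hy1, hy2⟩, hyx⟩ := accPt_iff_nhds.1 (hacc x hx) (Metric.ball x δ)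
        (Metric.ball_mem_nhds x hδ)
      rw [Real.ball_eq_Ioo] at hy1
      rcases lt_or_gt_of_ne hyx with h | h
      · obtain ⟨m, hmM, hm⟩ := exists_mid_in_Ioo E hcE hint hy2 hx h
        refine ⟨m, hball ?_, hmM⟩
        rw [Real.ball_eq_Ioo]
        exact ⟨hy1.1.trans hm.1, hm.2.trans (by linarith [hδ])⟩
      · obtain ⟨m, hmM, hm⟩ := exists_mid_in_Ioo E hcE hint hx hy2 h
        refine ⟨m, hball ?_, hmM⟩
        rw [Real.ball_eq_Ioo]
        exact ⟨lt_trans (by linarith [hδ]) hm.1, hm.2.trans hy1.2⟩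
    · rintro ⟨hcl, hxM⟩
      by_contra hxE
      -- x is in closure M but not in M and not in E
      have hbdd := hcE.isBounded
      have hMsub : midSet E ⊆ Set.Icc (sInf E) (sSup E) := by
        rintro m ⟨a, b, hab, ha, hb, hsub, rfl⟩
        have h1 : sInf E ≤ a := csInf_le hcE.bddBelow ha
        have h2 : b ≤ sSup E := le_csSup hcE.bddAbove hb
        exact ⟨by linarith, by linarith⟩
      have hxIcc : x ∈ Set.Icc (sInf E) (sSup E) :=
        closure_minimal hMsub isClosed_Icc hcl
      have hInfE : sInf E ∈ E := hcE.sInf_mem hne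
      have hSupE : sSup E ∈ E := hcE.sSup_mem hne
      obtain ⟨a, b, hax, hxb, haE, hbE, hsub, hmM⟩ :=
        mid_between E hcE hxE ⟨sInf E, hInfE, hxIcc.1⟩ ⟨sSup E, hSupE, hxIcc.2⟩
      set m := (a + b) / 2 with hm_def
      have hxm : x ≠ m := fun h => hxM (h ▸ hmM)
      have : (Set.Ioo a b ∩ {m}ᶜ ∩ midSet E).Nonempty := by
        rw [mem_closure_iff] at hcl
        exact hcl _ (isOpen_Ioo.inter isClosed_singleton.isOpen_compl)
          ⟨⟨hax, hxb⟩, hxm⟩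
      obtain ⟨m', ⟨hm'Ioo, hm'ne⟩, hm'M⟩ := this
      exact hm'ne (mid_unique E (hax.trans hxb) haE hbE hsub hm'M hm'Ioo)
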